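/- Let n ≥ 3 and let a, b be nonzero real numbers. Then the set {a·k + b·h : k, h ∈ O(n)} has empty interior in M_n(ℝ). (This is the exceptional pair of types (SU(n), SU(n)) in the symmetric space SO_0(n,n)/SO(n)×SO(n), whose restricted root system is of type D_n: the orbits of elements of type SU(n) are a·SO(n) and a·{w ∈ O(n) : det w = −1}, and any sum of two such orbits has empty interior.) -/

import Mathlib

/- STATEMENT 16: Let n ≥ 3 and a, b nonzero reals. Then {a·k + b·h : k, h ∈ O(n)} has
empty interior in M_n(ℝ). -/

open Matrix Polynomial

lemma trace_pow_eq_sum_eig {n : ℕ} {A : Matrix (Fin n) (Fin n) ℝ} (hA : A.IsHermitian) (m : ℕ) :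
    Matrix.trace (A ^ m) = ∑ i, hA.eigenvalues i ^ m := by
  classical
  set U : Matrix (Fin n) (Fin n) ℝ := (Matrix.IsHermitian.eigenvectorUnitary hA : Matrix (Fin n) (Fin n) ℝ) with hU
  have hU1 : U * star U = 1 := (Matrix.mem_unitaryGroup_iff).mp (Matrix.IsHermitian.eigenvectorUnitary hA).2
  have hU2 : star U * U = 1 := (Matrix.mem_unitaryGroup_iff').mp (Matrix.IsHermitian.eigenvectorUnitary hA).2
  have hspec : A = U * Matrix.diagonal hA.eigenvalues * star U := by
    have := hA.spectral_theorem
    simpa [RCLike.ofReal_real_eq_id] using this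
  have hpow : A ^ m = U * (Matrix.diagonal hA.eigenvalues) ^ m * star U := by
    induction m with
    | zero => rw [pow_zero, pow_zero, Matrix.mul_one, hU1]
    | succ m ih =>
        rw [pow_succ, ih]
        have harw : U * diagonal hA.eigenvalues ^ m * star U * A
            = U * diagonal hA.eigenvalues ^ m * star U * (U * Matrix.diagonal hA.eigenvalues * star U) := by
          rw [← hspec]
        rw [harw]
        have key : star U * (U * (Matrix.diagonal hA.eigenvalues * star U))
            = Matrix.diagonal hA.eigenvalues * star U := by
          rw [← Matrix.mul_assoc, hU2, Matrix.one_mul]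
        simp only [Matrix.mul_assoc, key, pow_succ]
  rw [hpow, Matrix.trace_mul_cycle, hU2, Matrix.one_mul,
    Matrix.diagonal_pow, Matrix.trace_diagonal]
  simp [Pi.pow_apply]

lemma eig_not_inj {n : ℕ} (hn : 3 ≤ n) (a b : ℝ) (ha : a ≠ 0) (hb : b ≠ 0)
    {k h A : Matrix (Fin n) (Fin n) ℝ} (hk : kᵀ * k = 1) (hh : hᵀ * h = 1)
    (hAdef : A = (a • k + b • h)ᵀ * (a • k + b • h)) (hA : A.IsHermitian) :
    ¬ Function.Injective hA.eigenvalues := by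
  classical
  intro hinj
  set W : Matrix (Fin n) (Fin n) ℝ := kᵀ * h with hWdef
  have hk' : k * kᵀ = 1 := mul_eq_one_comm.mp hk
  have hh' : h * hᵀ = 1 := mul_eq_one_comm.mp hh
  have hWT : Wᵀ = hᵀ * k := by rw [hWdef, Matrix.transpose_mul, Matrix.transpose_transpose]
  have hWW : Wᵀ * W = 1 := by
    rw [hWT, hWdef, Matrix.mul_assoc, ← Matrix.mul_assoc k, hk', Matrix.one_mul, hh]
  have hWW' : W * Wᵀ = 1 := mul_eq_one_comm.mp hWW
  have hWs : star W = Wᵀ := Matrix.conjTranspose_eq_transpose_of_trivial W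
  -- expansion of A
  have hAexp : A = ((a^2+b^2) • (1 : Matrix (Fin n) (Fin n) ℝ)) + (a*b) • (W + Wᵀ) := by
    rw [hAdef, hWdef, hWT]
    simp only [Matrix.transpose_add, Matrix.transpose_smul, Matrix.add_mul, Matrix.mul_add,
      Matrix.smul_mul, Matrix.mul_smul, hk, hh, smul_smul, smul_add]
    module
  -- W commutes with A
  have hWA : W * A = A * W := by
    rw [hAexp]
    simp only [Matrix.mul_add, Matrix.add_mul, Matrix.mul_smul, Matrix.smul_mul,
      Matrix.mul_one, Matrix.one_mul, Matrix.mul_add, Matrix.add_mul]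
    rw [hWW, hWW']
  -- spectral theorem
  set U : Matrix (Fin n) (Fin n) ℝ :=
    (Matrix.IsHermitian.eigenvectorUnitary hA : Matrix (Fin n) (Fin n) ℝ) with hU
  have hU1 : U * star U = 1 :=
    (Matrix.mem_unitaryGroup_iff).mp (Matrix.IsHermitian.eigenvectorUnitary hA).2
  have hU2 : star U * U = 1 :=
    (Matrix.mem_unitaryGroup_iff').mp (Matrix.IsHermitian.eigenvectorUnitary hA).2
  have hD : star U * A * U = Matrix.diagonal hA.eigenvalues := by
    have := hA.conjStarAlgAut_star_eigenvectorUnitary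
    simpa [Unitary.conjStarAlgAut_apply, RCLike.ofReal_real_eq_id] using this
  set B : Matrix (Fin n) (Fin n) ℝ := star U * W * U with hB
  have hBs : star B = star U * Wᵀ * U := by
    simp only [hB, Matrix.star_mul, star_star]
    rw [hWs, ← Matrix.mul_assoc]
  -- B commutes with the diagonal matrix
  have hBD : B * Matrix.diagonal hA.eigenvalues = Matrix.diagonal hA.eigenvalues * B := by
    rw [← hD, hB]
    calc star U * W * U * (star U * A * U) = star U * (W * (U * star U) * A) * U := by
          simp only [Matrix.mul_assoc]
      _ = star U * (W * A) * U := by rw [hU1, Matrix.mul_one]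
      _ = star U * (A * W) * U := by rw [hWA]
      _ = star U * (A * (U * star U) * W) * U := by rw [hU1, Matrix.mul_one]
      _ = star U * A * U * (star U * W * U) := by simp only [Matrix.mul_assoc]
  -- off-diagonal entries of B vanish
  have hBoff : ∀ i j, i ≠ j → B i j = 0 := by
    intro i j hij
    have h1 : (B * Matrix.diagonal hA.eigenvalues) i j
        = (Matrix.diagonal hA.eigenvalues * B) i j := by rw [hBD]
    rw [Matrix.mul_diagonal, Matrix.diagonal_mul] at h1
    have h2 : hA.eigenvalues i ≠ hA.eigenvalues j := fun hc => hij (hinj hc)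
    have h3 : B i j * (hA.eigenvalues j - hA.eigenvalues i) = 0 := by
      rw [mul_sub, h1]; ring
    rcases mul_eq_zero.mp h3 with h4 | h4
    · exact h4
    · exact absurd (by linarith : hA.eigenvalues j = hA.eigenvalues i) (Ne.symm h2)
  -- star B * B = 1
  have hBB : star B * B = 1 := by
    rw [hBs, hB]
    calc star U * Wᵀ * U * (star U * W * U) = star U * (Wᵀ * (U * star U) * W) * U := by
          simp only [Matrix.mul_assoc]
      _ = star U * (Wᵀ * W) * U := by rw [hU1, Matrix.mul_one]
      _ = 1 := by rw [hWW, Matrix.mul_one, hU2]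
  -- diagonal entries of B are ±1
  have hBii : ∀ i, B i i = 1 ∨ B i i = -1 := by
    intro i
    have h1 : (star B * B) i i = (1 : Matrix (Fin n) (Fin n) ℝ) i i := by rw [hBB]
    rw [Matrix.one_apply_eq, Matrix.mul_apply] at h1
    have h2 : ∀ x : Fin n, x ∈ Finset.univ → x ≠ i → (star B) i x * B x i = 0 := by
      intro x _ hx
      rw [hBoff x i hx, mul_zero]
    rw [Finset.sum_eq_single i h2 (by simp)] at h1
    have h3 : (star B) i i = B i i := by
      rw [Matrix.star_apply, star_trivial]
    rw [h3] at h1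
    exact mul_self_eq_one_iff.mp h1
  -- eigenvalues in terms of B
  have hlam : ∀ i, hA.eigenvalues i = a^2 + b^2 + 2*(a*b) * B i i := by
    intro i
    have h1 : Matrix.diagonal hA.eigenvalues
        = ((a^2+b^2) • (1 : Matrix (Fin n) (Fin n) ℝ)) + (a*b) • (B + star B) := by
      rw [← hD, hBs, hB]
      calc star U * A * U
          = star U * (((a^2+b^2) • (1 : Matrix (Fin n) (Fin n) ℝ)) + (a*b) • (W + Wᵀ)) * U := by
            rw [← hAexp]
        _ = (a^2+b^2) • (star U * U) + (a*b) • (star U * W * U + star U * Wᵀ * U) := by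
            simp only [Matrix.mul_add, Matrix.add_mul, Matrix.mul_smul, Matrix.smul_mul,
              Matrix.mul_one, Matrix.one_mul, Matrix.mul_assoc]
        _ = ((a^2+b^2) • (1 : Matrix (Fin n) (Fin n) ℝ)) + (a*b) • (star U * W * U + star U * Wᵀ * U) := by
            rw [hU2]
    have h2 := congrFun (congrFun h1 i) i
    have h3 : (star B) i i = B i i := by rw [Matrix.star_apply, star_trivial]
    simp only [Matrix.diagonal_apply_eq, Matrix.add_apply, Matrix.smul_apply,
      Matrix.one_apply_eq, smul_eq_mul, mul_one] at h2
    rw [h2, h3]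
    ring
  -- pigeonhole among three indices
  have key : ∀ i j : Fin n, B i i = B j j → i = j := by
    intro i j hij
    exact hinj (by rw [hlam, hlam, hij])
  have h0n : (0 : ℕ) < n := by omega
  have h1n : (1 : ℕ) < n := by omega
  have h2n : (2 : ℕ) < n := by omega
  set i0 : Fin n := ⟨0, h0n⟩
  set i1 : Fin n := ⟨1, h1n⟩
  set i2 : Fin n := ⟨2, h2n⟩
  have h01 : i0 ≠ i1 := by simp [i0, i1, Fin.ext_iff]
  have h02 : i0 ≠ i2 := by simp [i0, i2, Fin.ext_iff]
  have h12 : i1 ≠ i2 := by simp [i1, i2, Fin.ext_iff]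
  rcases hBii i0 with p0 | p0 <;> rcases hBii i1 with p1 | p1 <;> rcases hBii i2 with p2 | p2
  · exact h01 (key i0 i1 (by rw [p0, p1]))
  · exact h01 (key i0 i1 (by rw [p0, p1]))
  · exact h02 (key i0 i2 (by rw [p0, p2]))
  · exact h12 (key i1 i2 (by rw [p1, p2]))
  · exact h12 (key i1 i2 (by rw [p1, p2]))
  · exact h02 (key i0 i2 (by rw [p0, p2]))
  · exact h01 (key i0 i1 (by rw [p0, p1]))
  · exact h01 (key i0 i1 (by rw [p0, p1]))

/-- Hankel matrix of power-sum traces. -/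
noncomputable def hankTr {n : ℕ} (A : Matrix (Fin n) (Fin n) ℝ) : Matrix (Fin n) (Fin n) ℝ :=
  Matrix.of fun i j : Fin n => Matrix.trace (A ^ ((i : ℕ) + (j : ℕ)))

lemma hankTr_eq {n : ℕ} {A : Matrix (Fin n) (Fin n) ℝ} (hA : A.IsHermitian) :
    hankTr A = (Matrix.vandermonde hA.eigenvalues)ᵀ * Matrix.vandermonde hA.eigenvalues := by
  ext i j
  rw [Matrix.vandermonde_transpose_mul_vandermonde]
  simp only [hankTr, Matrix.of_apply]
  rw [trace_pow_eq_sum_eig hA]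

lemma hankTr_det_zero_of_not_inj {n : ℕ} {A : Matrix (Fin n) (Fin n) ℝ} (hA : A.IsHermitian)
    (hni : ¬ Function.Injective hA.eigenvalues) : (hankTr A).det = 0 := by
  rw [hankTr_eq hA, Matrix.det_mul, Matrix.det_transpose]
  have hv : (Matrix.vandermonde hA.eigenvalues).det = 0 := by
    by_contra hd
    exact hni (Matrix.det_vandermonde_ne_zero_iff.mp hd)
  rw [hv, mul_zero]

lemma hankTr_det_witness {n : ℕ} :
    (hankTr ((Matrix.diagonal (fun i : Fin n => ((i : ℕ) : ℝ) + 1))ᵀ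
      * Matrix.diagonal (fun i : Fin n => ((i : ℕ) : ℝ) + 1))).det ≠ 0 := by
  classical
  set μ : Fin n → ℝ := fun i => ((i : ℕ) : ℝ) + 1 with hμ
  set ν : Fin n → ℝ := fun i => μ i * μ i with hν
  have hd : (Matrix.diagonal μ)ᵀ * Matrix.diagonal μ = Matrix.diagonal ν := by
    rw [Matrix.diagonal_transpose, Matrix.diagonal_mul_diagonal]
  rw [hd]
  have he : hankTr (Matrix.diagonal ν)
      = (Matrix.vandermonde ν)ᵀ * Matrix.vandermonde ν := by
    ext i j
    rw [Matrix.vandermonde_transpose_mul_vandermonde]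
    simp only [hankTr, Matrix.of_apply]
    rw [Matrix.diagonal_pow, Matrix.trace_diagonal]
    simp [Pi.pow_apply]
  rw [he, Matrix.det_mul, Matrix.det_transpose]
  have hinj : Function.Injective ν := by
    intro i j hij
    have h1 : (0:ℝ) < μ i := by positivity
    have h2 : (0:ℝ) < μ j := by positivity
    have hij' : μ i * μ i = μ j * μ j := hij
    have : μ i = μ j := by
      rcases mul_self_eq_mul_self_iff.mp hij' with hc | hc
      · exact hc
      · exfalso; rw [hc] at h1; linarith
    have : ((i:ℕ):ℝ) = ((j:ℕ):ℝ) := by simpa [hμ] using this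
    exact Fin.ext (Nat.cast_injective this)
  have hv := Matrix.det_vandermonde_ne_zero_iff.mpr hinj
  exact mul_ne_zero hv hv

lemma trace_map' {n : ℕ} (M : Matrix (Fin n) (Fin n) ℝ[X]) (t : ℝ) :
    (Matrix.trace M).eval t = Matrix.trace (M.map (Polynomial.evalRingHom t)) := by
  simp [Matrix.trace, Matrix.diag, Polynomial.eval_finset_sum, Matrix.map_apply]

lemma exists_poly {n : ℕ} (Z₀ Z₁ : Matrix (Fin n) (Fin n) ℝ) :
    ∃ p : ℝ[X], ∀ t : ℝ,
      p.eval t = (hankTr ((Z₀ + t • (Z₁ - Z₀))ᵀ * (Z₀ + t • (Z₁ - Z₀)))).det := by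
  classical
  set Zp : Matrix (Fin n) (Fin n) ℝ[X] :=
    Matrix.of fun i j => Polynomial.C (Z₀ i j) + Polynomial.X * Polynomial.C ((Z₁ - Z₀) i j)
    with hZp
  refine ⟨(Matrix.of fun i j : Fin n => Matrix.trace ((Zpᵀ * Zp) ^ ((i : ℕ) + (j : ℕ)))).det, ?_⟩
  intro t
  set f := Polynomial.evalRingHom t with hf
  have hmap : Zp.map f = Z₀ + t • (Z₁ - Z₀) := by
    ext i j
    simp [hZp, hf, Matrix.map_apply, Matrix.add_apply, Matrix.smul_apply, smul_eq_mul, mul_comm]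
  have hdet := RingHom.map_det f (Matrix.of fun i j : Fin n =>
    Matrix.trace ((Zpᵀ * Zp) ^ ((i : ℕ) + (j : ℕ))))
  have hlhs : f ((Matrix.of fun i j : Fin n =>
      Matrix.trace ((Zpᵀ * Zp) ^ ((i : ℕ) + (j : ℕ)))).det)
      = ((Matrix.of fun i j : Fin n =>
      Matrix.trace ((Zpᵀ * Zp) ^ ((i : ℕ) + (j : ℕ)))).det).eval t := rfl
  rw [hlhs] at hdet
  rw [hdet]
  congr 1
  ext i j
  have hpow : ((Zpᵀ * Zp) ^ ((i : ℕ) + (j : ℕ))).map f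
      = ((Zp.map f)ᵀ * Zp.map f) ^ ((i : ℕ) + (j : ℕ)) := by
    have h1 : ∀ M : Matrix (Fin n) (Fin n) ℝ[X], M.map f = f.mapMatrix M := fun _ => rfl
    rw [h1, map_pow, ← h1, Matrix.map_mul, Matrix.transpose_map]
  rw [RingHom.mapMatrix_apply]
  simp only [Matrix.map_apply, Matrix.of_apply, hankTr]
  show (((Zpᵀ * Zp) ^ ((i : ℕ) + (j : ℕ))).trace).eval t = _
  rw [trace_map', hpow, hmap]

theorem exceptional_pair_SUn_SUn_empty_interior
    (n : ℕ) (hn : 3 ≤ n) (a b : ℝ) (ha : a ≠ 0) (hb : b ≠ 0) :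
    interior {Z : Matrix (Fin n) (Fin n) ℝ |
        ∃ k h : Matrix (Fin n) (Fin n) ℝ,
          kᵀ * k = 1 ∧ hᵀ * h = 1 ∧ Z = a • k + b • h} = ∅ := by
  classical
  by_contra hne
  obtain ⟨Z₀, hZ₀⟩ := Set.nonempty_iff_ne_empty.mpr hne
  set Z₁ : Matrix (Fin n) (Fin n) ℝ := Matrix.diagonal (fun i : Fin n => ((i : ℕ) : ℝ) + 1)
    with hZ₁
  obtain ⟨p, hp⟩ := exists_poly Z₀ Z₁
  have hcont : Continuous (fun t : ℝ => Z₀ + t • (Z₁ - Z₀)) :=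
    continuous_const.add (continuous_id.smul continuous_const)
  have hopen : IsOpen ((fun t : ℝ => Z₀ + t • (Z₁ - Z₀)) ⁻¹' interior
      {Z : Matrix (Fin n) (Fin n) ℝ | ∃ k h : Matrix (Fin n) (Fin n) ℝ,
          kᵀ * k = 1 ∧ hᵀ * h = 1 ∧ Z = a • k + b • h}) :=
    isOpen_interior.preimage hcont
  have h0 : (0 : ℝ) ∈ (fun t : ℝ => Z₀ + t • (Z₁ - Z₀)) ⁻¹' interior
      {Z : Matrix (Fin n) (Fin n) ℝ | ∃ k h : Matrix (Fin n) (Fin n) ℝ,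
          kᵀ * k = 1 ∧ hᵀ * h = 1 ∧ Z = a • k + b • h} := by
    simpa using hZ₀
  obtain ⟨δ, hδ, hball⟩ := Metric.isOpen_iff.mp hopen 0 h0
  have hroots : Set.Ioo (-δ) δ ⊆ {x : ℝ | p.IsRoot x} := by
    intro t ht
    have hmem : t ∈ Metric.ball (0 : ℝ) δ := by
      rw [Real.ball_eq_Ioo]
      simpa using ht
    have h1 := interior_subset (hball hmem)
    obtain ⟨k, hmat, hk, hh, hZ⟩ := h1
    have hA : ((a • k + b • hmat)ᵀ * (a • k + b • hmat)).IsHermitian := by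
      rw [← Matrix.conjTranspose_eq_transpose_of_trivial]
      exact Matrix.isHermitian_conjTranspose_mul_self _
    have hdet := hankTr_det_zero_of_not_inj hA (eig_not_inj hn a b ha hb hk hh rfl hA)
    have hZ' : Z₀ + t • (Z₁ - Z₀) = a • k + b • hmat := hZ
    show p.eval t = 0
    rw [hp t, hZ']
    exact hdet
  have hp0 : p = 0 :=
    p.eq_zero_of_infinite_isRoot ((Set.Ioo_infinite (by linarith : -δ < δ)).mono hroots)
  have h1 := hp 1
  rw [hp0] at h1
  have hZsimp : Z₀ + (1 : ℝ) • (Z₁ - Z₀) = Z₁ := by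
    rw [one_smul]
    abel
  rw [hZsimp] at h1
  simp only [Polynomial.eval_zero] at h1
  exact hankTr_det_witness (n := n) h1.symm
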